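/- For real s < 0, ∫_0^∞ y^{1-s}/sinh²(π y) dy = (2π)^{s-2} · 4(1-s) Γ(1-s) ζ(1-s). -/

import Mathlib

open Real MeasureTheory

theorem stmt_7 (s : ℝ) (hs : s < 0) :
    ∫ y in Set.Ioi (0 : ℝ), y ^ (1 - s) / (Real.sinh (π * y)) ^ 2 =
      (2 * π) ^ (s - 2) * (4 * (1 - s) * Real.Gamma (1 - s) *
        ∑' n : ℕ, ((n : ℝ) + 1) ^ (-(1 - s))) := by
  have hpi : (0 : ℝ) < π := Real.pi_pos
  set F : ℕ → ℝ → ℝ := fun n y => y ^ (1 - s) * (4 * ((n : ℝ) + 1) *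
      Real.exp (-(2 * π * ((n : ℝ) + 1)) * y)) with hF_def
  have hb : ∀ n : ℕ, (0 : ℝ) < 2 * π * ((n : ℝ) + 1) := by
    intro n; positivity
  set C : ℝ := (2 * π) ^ (s - 2) * (4 * Real.Gamma (2 - s)) with hC_def
  -- value of each term's integral
  have hval : ∀ n : ℕ, ∫ y in Set.Ioi (0 : ℝ), F n y =
      C * ((n : ℝ) + 1) ^ (s - 1) := by
    intro n
    have h := integral_rpow_mul_exp_neg_mul_Ioi (a := 2 - s)
      (r := 2 * π * ((n : ℝ) + 1)) (by linarith) (hb n)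
    have h2 : ∫ y in Set.Ioi (0 : ℝ), F n y =
        (4 * ((n : ℝ) + 1)) * ∫ t in Set.Ioi (0 : ℝ),
          t ^ (2 - s - 1) * Real.exp (-(2 * π * ((n : ℝ) + 1) * t)) := by
      rw [← integral_const_mul]
      refine setIntegral_congr_fun measurableSet_Ioi (fun y hy => ?_)
      simp only [hF_def]
      ring_nf
    rw [h2, h]
    have hx : (1 / (2 * π * ((n : ℝ) + 1))) ^ (2 - s)
        = (2 * π) ^ (s - 2) * ((n : ℝ) + 1) ^ (s - 2) := by
      rw [Real.div_rpow (by norm_num) (hb n).le, Real.one_rpow,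
        Real.mul_rpow (by positivity) (by positivity),
        show s - 2 = -(2 - s) by ring, Real.rpow_neg (by positivity),
        Real.rpow_neg (by positivity), one_div, mul_inv]
    have hx2 : ((n : ℝ) + 1) ^ (s - 1) = ((n : ℝ) + 1) * ((n : ℝ) + 1) ^ (s - 2) := by
      rw [show s - 1 = 1 + (s - 2) by ring, Real.rpow_add (by positivity), Real.rpow_one]
    rw [hx, hC_def, hx2]; ring
  -- integrability of each term
  have hint : ∀ n : ℕ, IntegrableOn (F n) (Set.Ioi (0 : ℝ)) := by
    intro n
    have h := integrableOn_rpow_mul_exp_neg_mul_rpow (p := 1) (s := 1 - s)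
      (b := 2 * π * ((n : ℝ) + 1)) (by linarith) zero_lt_one (hb n)
    simp only [Real.rpow_one] at h
    refine IntegrableOn.congr_fun (h.const_mul (4 * ((n : ℝ) + 1)))
      (fun y hy => ?_) measurableSet_Ioi
    simp only [hF_def]; ring
  -- the integrals of the norms
  have hnorm : ∀ n : ℕ, ∫ y in Set.Ioi (0 : ℝ), ‖F n y‖ = C * ((n : ℝ) + 1) ^ (s - 1) := by
    intro n
    rw [← hval n]
    refine setIntegral_congr_fun measurableSet_Ioi (fun y hy => ?_)
    have hy' : (0 : ℝ) < y := hy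
    rw [Real.norm_eq_abs, abs_of_nonneg]
    simp only [hF_def]
    positivity
  -- summability
  have hsum : Summable (fun n : ℕ => ((n : ℝ) + 1) ^ (s - 1)) := by
    have h1 : Summable (fun n : ℕ => ((n : ℝ)) ^ (s - 1)) :=
      Real.summable_nat_rpow.mpr (by linarith)
    have h2 := (summable_nat_add_iff (f := fun n : ℕ => ((n : ℝ)) ^ (s - 1)) 1).mpr h1
    simpa using h2
  -- pointwise sum
  have hpt : ∀ y ∈ Set.Ioi (0 : ℝ),
      HasSum (fun n => F n y) (y ^ (1 - s) / (Real.sinh (π * y)) ^ 2) := by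
    intro y hy
    have hy' : (0 : ℝ) < y := hy
    set r : ℝ := Real.exp (-(2 * π * y)) with hr_def
    have hr0 : 0 < r := Real.exp_pos _
    have hr1 : r < 1 := by
      rw [hr_def]
      have : -(2 * π * y) < 0 := by nlinarith
      calc Real.exp (-(2 * π * y)) < Real.exp 0 := Real.exp_lt_exp.mpr this
        _ = 1 := Real.exp_zero
    have hgeo : HasSum (fun n : ℕ => (n : ℝ) * r ^ n) (r / (1 - r) ^ 2) :=
      hasSum_coe_mul_geometric_of_norm_lt_one
        (by rw [Real.norm_eq_abs, abs_of_pos hr0]; exact hr1)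
    have hshift : HasSum (fun n : ℕ => ((n : ℝ) + 1) * r ^ (n + 1)) (r / (1 - r) ^ 2) := by
      have h2 := (hasSum_nat_add_iff (f := fun n : ℕ => (n : ℝ) * r ^ n) 1).mpr
        (by simpa using hgeo)
      simpa using h2
    have hterm : ∀ n : ℕ, F n y = (y ^ (1 - s) * 4) * (((n : ℝ) + 1) * r ^ (n + 1)) := by
      intro n
      have he : Real.exp (-(2 * π * ((n : ℝ) + 1)) * y) = r ^ (n + 1) := by
        rw [hr_def, ← Real.exp_nat_mul]
        congr 1
        push_cast; ring
      simp only [hF_def]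
      rw [he]; ring
    have hsinh : y ^ (1 - s) / (Real.sinh (π * y)) ^ 2
        = (y ^ (1 - s) * 4) * (r / (1 - r) ^ 2) := by
      set u : ℝ := Real.exp (π * y) with hu_def
      set v : ℝ := Real.exp (-(π * y)) with hv_def
      have huv : u * v = 1 := by
        rw [hu_def, hv_def, ← Real.exp_add]; simp
      have hrv : r = v ^ 2 := by
        rw [hr_def, hv_def, sq, ← Real.exp_add]
        ring_nf
      have hv0 : 0 < v := Real.exp_pos _
      have hv1 : v < 1 := by
        rw [hv_def]
        calc Real.exp (-(π * y)) < Real.exp 0 := Real.exp_lt_exp.mpr (by nlinarith)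
          _ = 1 := Real.exp_zero
      have hu1 : 1 < u := by
        rw [hu_def]
        calc (1 : ℝ) = Real.exp 0 := Real.exp_zero.symm
          _ < Real.exp (π * y) := Real.exp_lt_exp.mpr (by positivity)
      have hne : u - v ≠ 0 := by nlinarith
      have h1v : (1 : ℝ) - v ^ 2 ≠ 0 := by nlinarith
      have key : (u - v) ^ 2 * v ^ 2 = (1 - v ^ 2) ^ 2 := by
        linear_combination (u * v + 1 - 2 * v ^ 2) * huv
      rw [Real.sinh_eq, ← hu_def, ← hv_def, hrv]
      field_simp
      linear_combination (-4 : ℝ) * key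
    rw [hsinh]
    have := hshift.mul_left (y ^ (1 - s) * 4)
    simpa only [hterm] using this
  -- put it together
  have hmain := hasSum_integral_of_summable_integral_norm
    (μ := volume.restrict (Set.Ioi (0 : ℝ))) (F := F) hint
    (by simpa only [hnorm] using hsum.mul_left C)
  have heq : ∫ y in Set.Ioi (0 : ℝ), (∑' n : ℕ, F n y)
      = ∫ y in Set.Ioi (0 : ℝ), y ^ (1 - s) / (Real.sinh (π * y)) ^ 2 :=
    setIntegral_congr_fun measurableSet_Ioi (fun y hy => (hpt y hy).tsum_eq)
  have hfinal := hmain.tsum_eq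
  rw [heq] at hfinal
  rw [← hfinal]
  simp only [hval]
  rw [tsum_mul_left, hC_def]
  have hG : Real.Gamma (2 - s) = (1 - s) * Real.Gamma (1 - s) := by
    rw [show (2 : ℝ) - s = (1 - s) + 1 by ring, Real.Gamma_add_one (by linarith)]
  rw [hG]
  have : ∀ n : ℕ, ((n : ℝ) + 1) ^ (-(1 - s)) = ((n : ℝ) + 1) ^ (s - 1) := by
    intro n; norm_num
  simp only [this]
  ring
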